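/- Every connected P5-free graph G has a dominating set D such that the subgraph induced by D is either a path on 3 vertices or a complete graph. -/

import Mathlib

open SimpleGraph Finset
variable {V : Type}






def BTChain (G : SimpleGraph V) (S : Finset V) : ℕ → V → V → Prop
  | 0, x, y => x = y
  | (n+1), x, y => ∃ z, x ∈ S ∧ z ∈ S ∧ G.Adj x z ∧ BTChain G S n z y

def BTReach (G : SimpleGraph V) (S : Finset V) (x y : V) : Prop := ∃ n, BTChain G S n x y

def BTConn (G : SimpleGraph V) (S : Finset V) : Prop :=
  ∀ x ∈ S, ∀ y ∈ S, BTReach G S x y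

def BTDom (G : SimpleGraph V) (S : Finset V) : Prop :=
  ∀ v, v ∈ S ∨ ∃ u ∈ S, G.Adj u v

lemma BTChain.trans {G : SimpleGraph V} {S : Finset V} :
    ∀ {n m : ℕ} {x y z : V}, BTChain G S n x y → BTChain G S m y z → BTChain G S (n + m) x z := by
  intro n
  induction n with
  | zero => intro m x y z h1 h2; cases h1; simpa using h2
  | succ k ih =>
    intro m x y z h1 h2
    obtain ⟨w, hxS, hwS, hadj, hch⟩ := h1
    have h3 : BTChain G S ((k + m) + 1) x z := ⟨w, hxS, hwS, hadj, ih hch h2⟩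
    have h4 : (k + m) + 1 = k + 1 + m := by omega
    rw [h4] at h3; exact h3

lemma BTReach.trans {G : SimpleGraph V} {S : Finset V} {x y z : V}
    (h1 : BTReach G S x y) (h2 : BTReach G S y z) : BTReach G S x z := by
  obtain ⟨n, h1⟩ := h1; obtain ⟨m, h2⟩ := h2; exact ⟨n + m, h1.trans h2⟩

lemma BTChain.symm {G : SimpleGraph V} {S : Finset V} :
    ∀ {n : ℕ} {x y : V}, BTChain G S n x y → BTChain G S n y x := by
  intro n
  induction n with
  | zero =>
    intro x y h
    have h' : x = y := h
    subst h'; rfl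
  | succ k ih =>
    intro x y h
    obtain ⟨w, hxS, hwS, hadj, hch⟩ := h
    have h1 : BTChain G S 1 w x := ⟨x, hwS, hxS, hadj.symm, rfl⟩
    simpa using (ih hch).trans h1

lemma BTReach.symm {G : SimpleGraph V} {S : Finset V} {x y : V}
    (h : BTReach G S x y) : BTReach G S y x := by
  obtain ⟨n, h⟩ := h; exact ⟨n, h.symm⟩

lemma BTReach.refl (G : SimpleGraph V) (S : Finset V) (x : V) : BTReach G S x x := ⟨0, rfl⟩

lemma BTReach.of_adj {G : SimpleGraph V} {S : Finset V} {x y : V}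
    (hx : x ∈ S) (hy : y ∈ S) (h : G.Adj x y) : BTReach G S x y := ⟨1, y, hx, hy, h, rfl⟩

/-- Build an induced P5 from five vertices with path adjacencies and the six non-adjacencies. -/
lemma BTp5 {G : SimpleGraph V} {a b c d e : V}
    (hab : G.Adj a b) (hbc : G.Adj b c) (hcd : G.Adj c d) (hde : G.Adj d e)
    (hac : ¬ G.Adj a c) (had : ¬ G.Adj a d) (hae : ¬ G.Adj a e)
    (hbd : ¬ G.Adj b d) (hbe : ¬ G.Adj b e) (hce : ¬ G.Adj c e) :
    Nonempty (SimpleGraph.pathGraph 5 ↪g G) := by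
  have hba : G.Adj b a := hab.symm
  have hcb : G.Adj c b := hbc.symm
  have hdc : G.Adj d c := hcd.symm
  have hed : G.Adj e d := hde.symm
  have hca : ¬ G.Adj c a := fun h => hac h.symm
  have hda : ¬ G.Adj d a := fun h => had h.symm
  have hea : ¬ G.Adj e a := fun h => hae h.symm
  have hdb : ¬ G.Adj d b := fun h => hbd h.symm
  have heb : ¬ G.Adj e b := fun h => hbe h.symm
  have hec : ¬ G.Adj e c := fun h => hce h.symm
  have haa : ¬ G.Adj a a := G.loopless.irrefl a
  have hbb : ¬ G.Adj b b := G.loopless.irrefl b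
  have hcc : ¬ G.Adj c c := G.loopless.irrefl c
  have hdd : ¬ G.Adj d d := G.loopless.irrefl d
  have hee : ¬ G.Adj e e := G.loopless.irrefl e
  have nab : a ≠ b := hab.ne
  have nbc : b ≠ c := hbc.ne
  have ncd : c ≠ d := hcd.ne
  have nde : d ≠ e := hde.ne
  have nac : a ≠ c := fun h => had (h ▸ hcd)
  have nad : a ≠ d := fun h => hae (h ▸ hde)
  have nae : a ≠ e := fun h => hbe ((h ▸ hab).symm)
  have nbd : b ≠ d := fun h => had (h ▸ hab)
  have nbe : b ≠ e := fun h => hae (h ▸ hab)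
  have nce : c ≠ e := fun h => hbe (h ▸ hbc)
  refine ⟨⟨⟨![a, b, c, d, e], ?_⟩, ?_⟩⟩
  · intro i j hij
    fin_cases i <;> fin_cases j <;> simp_all
  · intro i j
    fin_cases i <;> fin_cases j <;>
      simp [SimpleGraph.pathGraph_adj, hab, hbc, hcd, hde, hac, had, hae, hbd, hbe, hce,
        hba, hcb, hdc, hed, hca, hda, hea, hdb, heb, hec, haa, hbb, hcc, hdd, hee] <;>
      assumption




lemma BTp3iso (G : SimpleGraph V) {x b y : V}
    (hxb : G.Adj x b) (hby : G.Adj b y) (hxy : ¬ G.Adj x y) (hnxy : x ≠ y) :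
    Nonempty ((G.induce ({x, b, y} : Set V)) ≃g SimpleGraph.pathGraph 3) := by
  classical
  have hnxb : x ≠ b := hxb.ne
  have hnby : b ≠ y := hby.ne
  have hxm : x ∈ ({x, b, y} : Set V) := by simp
  have hbm : b ∈ ({x, b, y} : Set V) := by simp
  have hym : y ∈ ({x, b, y} : Set V) := by simp
  refine ⟨⟨⟨?_, ?_, ?_, ?_⟩, ?_⟩⟩
  · exact fun u => if u.val = x then 0 else if u.val = b then 1 else 2
  · exact fun i => if i = 0 then ⟨x, hxm⟩ else if i = 1 then ⟨b, hbm⟩ else ⟨y, hym⟩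
  · rintro ⟨v, hv⟩
    rcases hv with h | h | h <;> subst h <;>
      simp [hnxb, hnby, hnxy, Ne.symm hnxb, Ne.symm hnby, Ne.symm hnxy]
  · intro i
    fin_cases i <;> simp [hnxb, hnby, hnxy, Ne.symm hnxb, Ne.symm hnby, Ne.symm hnxy]
  · rintro ⟨u, hu⟩ ⟨v, hv⟩
    rcases hu with h | h | h <;> rcases hv with h' | h' | h' <;> subst h <;> subst h' <;>
      simp_all [SimpleGraph.pathGraph_adj, Equiv.coe_fn_mk, hxb.symm, hby.symm,
        fun h => hxy (G.adj_symm h), Ne.symm hnxb, Ne.symm hnby, Ne.symm hnxy] <;>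
      first
        | exact hxb
        | exact fun h => hxy h.symm
        | exact hxb.symm
        | exact hby
        | exact hby.symm
        | decide
set_option maxHeartbeats 1000000 in
theorem stmt_1 {V : Type} [Fintype V] (G : SimpleGraph V)
    (hconn : G.Connected)
    (hP5free : ¬ Nonempty (SimpleGraph.pathGraph 5 ↪g G)) :
    ∃ D : Set V,
      (∀ v : V, v ∈ D ∨ ∃ u ∈ D, G.Adj u v) ∧
      (Nonempty ((G.induce D) ≃g SimpleGraph.pathGraph 3) ∨
        (∀ u v : D, u ≠ v → (G.induce D).Adj u v)) := by
  classical
  have huniv : (Finset.univ : Finset V).Nonempty ∧ BTConn G Finset.univ ∧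
      BTDom G Finset.univ := by
    refine ⟨?_, ?_, fun v => Or.inl (mem_univ v)⟩
    · have : Nonempty V := hconn.nonempty
      exact univ_nonempty
    · intro xx hxx yy hyy
      clear hxx hyy
      obtain ⟨w⟩ := hconn.preconnected xx yy
      induction w with
      | nil => exact BTReach.refl G _ _
      | cons h p ih => exact (BTReach.of_adj (mem_univ _) (mem_univ _) h).trans ih
  obtain ⟨D, hDmem, hDmin⟩ := Finset.exists_min_image
      (Finset.univ.filter fun E : Finset V => E.Nonempty ∧ BTConn G E ∧ BTDom G E)
      Finset.card (⟨Finset.univ, by simpa using huniv⟩)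
  simp only [mem_filter, mem_univ, true_and] at hDmem hDmin
  obtain ⟨hDne, hDconn, hDdom⟩ := hDmem
  have hmin : ∀ E : Finset V, E.Nonempty → BTConn G E → BTDom G E → D.card ≤ E.card :=
    fun E h1 h2 h3 => hDmin E ⟨h1, h2, h3⟩
  -- Common neighbor lemma
  have hCN : ∀ x y, x ∈ D → y ∈ D → x ≠ y → ¬ G.Adj x y →
      ∃ b, b ∈ D ∧ G.Adj b x ∧ G.Adj b y := by
    intro x y hx hy hne hnadj
    have hex : ∃ n, BTChain G D n x y := hDconn x hx y hy
    obtain ⟨m, hch, hleast⟩ : ∃ m, BTChain G D m x y ∧ ∀ k, k < m → ¬ BTChain G D k x y :=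
      ⟨Nat.find hex, Nat.find_spec hex, fun k hk => Nat.find_min hex hk⟩
    rcases m with _ | _ | _ | k
    · exact absurd (hch : x = y) hne
    · obtain ⟨z, _, _, hxz, hz⟩ := hch
      have : z = y := hz
      subst this
      exact absurd hxz hnadj
    · obtain ⟨z, _, hzD, hxz, hch1⟩ := hch
      obtain ⟨w, _, _, hzw, hw0⟩ := hch1
      have : w = y := hw0
      subst this
      exact ⟨z, hzD, hxz.symm, hzw⟩
    · exfalso
      obtain ⟨a, hxD, haD, hxa, hch2⟩ := hch
      obtain ⟨b', _, hbD, hab', hch1⟩ := hch2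
      have hch1c : BTChain G D (k+1) b' y := hch1
      obtain ⟨c, _, hcD, hb'c, hch0⟩ := hch1
      have hxb' : ¬ G.Adj x b' := fun h => hleast (k+2) (by omega) ⟨b', hxD, hbD, h, hch1c⟩
      have hxc : ¬ G.Adj x c := fun h => hleast (k+1) (by omega) ⟨c, hxD, hcD, h, hch0⟩
      have hac : ¬ G.Adj a c := fun h =>
        hleast (k+2) (by omega) ⟨a, hxD, haD, hxa, ⟨c, haD, hcD, h, hch0⟩⟩
      have hb'nx : b' ≠ x := fun h => hleast (k+1) (by omega) (h ▸ hch1c)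
      have hcnx : c ≠ x := fun h => hleast k (by omega) (h ▸ hch0)
      have hanx : a ≠ x := fun h => G.loopless.irrefl x (h ▸ hxa)
      by_cases hpriv : ∃ p, G.Adj x p ∧ p ∉ D ∧ ∀ e ∈ D, e ≠ x → ¬ G.Adj e p
      · obtain ⟨p, hpx, hpD, hp⟩ := hpriv
        exact hP5free (BTp5 hpx.symm hxa hab' hb'c
          (fun h => hp a haD hanx h.symm)
          (fun h => hp b' hbD hb'nx h.symm)
          (fun h => hp c hcD hcnx h.symm) hxb' hxc hac)
      · push_neg at hpriv
        have hdom' : BTDom G (D.erase x) := by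
          intro v
          by_cases hvx : v = x
          · subst hvx
            exact Or.inr ⟨a, mem_erase.2 ⟨hanx, haD⟩, hxa.symm⟩
          · rcases hDdom v with hvD | ⟨u, huD, huv⟩
            · exact Or.inl (mem_erase.2 ⟨hvx, hvD⟩)
            · by_cases hux : u = x
              · subst hux
                by_cases hvD : v ∈ D
                · exact Or.inl (mem_erase.2 ⟨hvx, hvD⟩)
                · obtain ⟨e, heD, hex2, hev⟩ := hpriv v huv hvD
                  exact Or.inr ⟨e, mem_erase.2 ⟨hex2, heD⟩, hev⟩
              · exact Or.inr ⟨u, mem_erase.2 ⟨hux, huD⟩, huv⟩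
        have hnc : ¬ BTConn G (D.erase x) := by
          intro hc
          have hle := hmin (D.erase x) ⟨a, mem_erase.2 ⟨hanx, haD⟩⟩ hc hdom'
          rw [card_erase_of_mem hx] at hle
          have : 0 < D.card := card_pos.2 ⟨x, hx⟩
          omega
        rw [BTConn] at hnc
        push_neg at hnc
        obtain ⟨u0, hu0, w0, hw0, hur⟩ := hnc
        have hexu : ∃ u, u ∈ D.erase x ∧ ¬ BTReach G (D.erase x) u a := by
          by_contra hcon
          push_neg at hcon
          exact hur ((hcon u0 hu0).trans (hcon w0 hw0).symm)
        obtain ⟨u, huE, hua⟩ := hexu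
        have hexit : ∀ n : ℕ, ∀ u, BTChain G D n u a → u ∈ D.erase x →
            ¬ BTReach G (D.erase x) u a →
            ∃ z, z ∈ D ∧ z ≠ x ∧ G.Adj x z ∧ ¬ BTReach G (D.erase x) z a := by
          intro n
          induction n with
          | zero =>
            intro u hch hu hnr
            have : u = a := hch
            subst this
            exact absurd (BTReach.refl G _ _) hnr
          | succ k2 ih =>
            intro u hch hu hnr
            obtain ⟨t, huD2, htD, hut, hch'⟩ := hch
            by_cases htx : t = x
            · subst htx
              exact ⟨u, (mem_erase.1 hu).2, (mem_erase.1 hu).1, hut.symm, hnr⟩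
            · by_cases hta : BTReach G (D.erase x) t a
              · exact absurd ((BTReach.of_adj hu (mem_erase.2 ⟨htx, htD⟩) hut).trans hta) hnr
              · exact ih t hch' (mem_erase.2 ⟨htx, htD⟩) hta
        obtain ⟨n0, hchua⟩ := hDconn u (mem_of_mem_erase huE) a haD
        obtain ⟨z, hzD, hznx, hxz, hza⟩ := hexit n0 u hchua huE hua
        have haE : a ∈ D.erase x := mem_erase.2 ⟨hanx, haD⟩
        have hbE : b' ∈ D.erase x := mem_erase.2 ⟨hb'nx, hbD⟩
        have hcE : c ∈ D.erase x := mem_erase.2 ⟨hcnx, hcD⟩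
        have hzE : z ∈ D.erase x := mem_erase.2 ⟨hznx, hzD⟩
        have hzna : ¬ G.Adj z a := fun h => hza (BTReach.of_adj hzE haE h)
        have hznb : ¬ G.Adj z b' := fun h =>
          hza ((BTReach.of_adj hzE hbE h).trans (BTReach.of_adj hbE haE hab'.symm))
        have hznc : ¬ G.Adj z c := fun h =>
          hza (((BTReach.of_adj hzE hcE h).trans (BTReach.of_adj hcE hbE hb'c.symm)).trans
            (BTReach.of_adj hbE haE hab'.symm))
        exact hP5free (BTp5 hxz.symm hxa hab' hb'c hzna hznb hznc hxb' hxc hac)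
  -- Private neighbor lemma
  have hNP : ∀ d x, d ∈ D → x ∈ D → d ≠ x → ¬ G.Adj d x →
      ∃ p, G.Adj d p ∧ p ∉ D ∧ ∀ e ∈ D, e ≠ d → ¬ G.Adj e p := by
    intro d x hdD hxD hne hnadj
    by_contra hcon
    push_neg at hcon
    have hnbr : ∃ t, t ∈ D ∧ t ≠ d ∧ G.Adj d t := by
      obtain ⟨n, hch⟩ := hDconn d hdD x hxD
      cases n with
      | zero => exact absurd (hch : d = x) hne
      | succ k =>
        obtain ⟨t, _, htD, hdt, _⟩ := hch
        exact ⟨t, htD, fun h => G.loopless.irrefl d (h ▸ hdt), hdt⟩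
    obtain ⟨t, htD, htd, hdt⟩ := hnbr
    have hxE : x ∈ D.erase d := mem_erase.2 ⟨Ne.symm hne, hxD⟩
    have hdom' : BTDom G (D.erase d) := by
      intro v
      by_cases hvd : v = d
      · subst hvd
        exact Or.inr ⟨t, mem_erase.2 ⟨htd, htD⟩, hdt.symm⟩
      · rcases hDdom v with hvD | ⟨u, huD, huv⟩
        · exact Or.inl (mem_erase.2 ⟨hvd, hvD⟩)
        · by_cases hud : u = d
          · subst hud
            by_cases hvD : v ∈ D
            · exact Or.inl (mem_erase.2 ⟨hvd, hvD⟩)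
            · obtain ⟨e, heD, hed, hev⟩ := hcon v huv hvD
              exact Or.inr ⟨e, mem_erase.2 ⟨hed, heD⟩, hev⟩
          · exact Or.inr ⟨u, mem_erase.2 ⟨hud, huD⟩, huv⟩
    have hnc : ¬ BTConn G (D.erase d) := by
      intro hc
      have hle := hmin (D.erase d) ⟨x, hxE⟩ hc hdom'
      rw [card_erase_of_mem hdD] at hle
      have : 0 < D.card := card_pos.2 ⟨d, hdD⟩
      omega
    rw [BTConn] at hnc
    push_neg at hnc
    obtain ⟨u0, hu0, w0, hw0, hur⟩ := hnc
    have hexu : ∃ u, u ∈ D.erase d ∧ ¬ BTReach G (D.erase d) u x := by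
      by_contra hc2
      push_neg at hc2
      exact hur ((hc2 u0 hu0).trans (hc2 w0 hw0).symm)
    obtain ⟨u, huE, hux⟩ := hexu
    have hunx : u ≠ x := by
      intro h
      subst h
      exact hux (BTReach.refl G _ _)
    have hnux : ¬ G.Adj u x := fun h => hux (BTReach.of_adj huE hxE h)
    obtain ⟨m', hmD, hmu, hmx⟩ := hCN u x (mem_of_mem_erase huE) hxD hunx hnux
    by_cases hmd : m' = d
    · subst hmd
      exact hnadj hmx
    · exact hux ((BTReach.of_adj huE (mem_erase.2 ⟨hmd, hmD⟩) hmu.symm).trans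
        (BTReach.of_adj (mem_erase.2 ⟨hmd, hmD⟩) hxE hmx))
  -- main dichotomy
  by_cases hclq : ∀ u ∈ D, ∀ v ∈ D, u ≠ v → G.Adj u v
  · refine ⟨↑D, fun v => ?_, Or.inr ?_⟩
    · rcases hDdom v with h | ⟨u, hu, huv⟩
      · exact Or.inl (by simpa using h)
      · exact Or.inr ⟨u, by simpa using hu, huv⟩
    · rintro ⟨u, hu⟩ ⟨v, hv⟩ hne
      have huv : G.Adj u v :=
        hclq u (by simpa using hu) v (by simpa using hv) fun h => hne (Subtype.ext h)
      simpa using huv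
  · push_neg at hclq
    obtain ⟨x, hx, y, hy, hnexy, hnxy⟩ := hclq
    obtain ⟨b, hbD, hbx, hby⟩ := hCN x y hx hy hnexy hnxy
    have hbnx : b ≠ x := hbx.ne
    have hbny : b ≠ y := hby.ne
    have hcard : D.card ≤ 3 := by
      by_contra hb4
      push_neg at hb4
      obtain ⟨p, hxp, hpD, hp⟩ := hNP x y hx hy hnexy hnxy
      obtain ⟨q, hyq, hqD, hq⟩ := hNP y x hy hx (Ne.symm hnexy) fun h => hnxy h.symm
      have hbp : ¬ G.Adj b p := hp b hbD hbnx
      have hyp : ¬ G.Adj y p := hp y hy (Ne.symm hnexy)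
      have hbq : ¬ G.Adj b q := hq b hbD hbny
      have hxq : ¬ G.Adj x q := hq x hx hnexy
      have hpb : ¬ G.Adj p b := fun h => hbp h.symm
      have hpy : ¬ G.Adj p y := fun h => hyp h.symm
      have hqb : ¬ G.Adj q b := fun h => hbq h.symm
      have hqx : ¬ G.Adj q x := fun h => hxq h.symm
      by_cases hpq : G.Adj p q
      · -- {x, b, y} is connected but cannot dominate
        have hxm : x ∈ ({x, b, y} : Finset V) := by simp
        have hbm : b ∈ ({x, b, y} : Finset V) := by simp
        have hym : y ∈ ({x, b, y} : Finset V) := by simp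
        have rxb : BTReach G {x, b, y} x b := BTReach.of_adj hxm hbm hbx.symm
        have rby : BTReach G {x, b, y} b y := BTReach.of_adj hbm hym hby
        have rxy := rxb.trans rby
        have hxbyconn : BTConn G {x, b, y} := by
          intro u hu w hw
          simp only [mem_insert, mem_singleton] at hu hw
          rcases hu with rfl | rfl | rfl <;> rcases hw with rfl | rfl | rfl
          exacts [BTReach.refl G _ _, rxb, rxy, rxb.symm, BTReach.refl G _ _, rby,
            rxy.symm, rby.symm, BTReach.refl G _ _]
        have hnotdom : ¬ BTDom G {x, b, y} := by
          intro hd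
          have hle := hmin {x, b, y} ⟨x, hxm⟩ hxbyconn hd
          have t1 := card_insert_le x ({b, y} : Finset V)
          have t2 := card_insert_le b ({y} : Finset V)
          rw [card_singleton] at t2
          omega
        rw [BTDom] at hnotdom
        push_neg at hnotdom
        obtain ⟨v, hvS, hvn⟩ := hnotdom
        have hvx : ¬ G.Adj x v := hvn x hxm
        have hvb : ¬ G.Adj b v := hvn b hbm
        have hvy : ¬ G.Adj y v := hvn y hym
        simp only [mem_insert, mem_singleton] at hvS
        push_neg at hvS
        obtain ⟨hvnex, hvneb, hvney⟩ := hvS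
        by_cases hvp : G.Adj v p
        · exact hP5free (BTp5 hvp hxp.symm hbx.symm hby
            (fun h => hvx h.symm) (fun h => hvb h.symm) (fun h => hvy h.symm) hpb hpy hnxy)
        by_cases hvq : G.Adj v q
        · exact hP5free (BTp5 hvq hyq.symm hby.symm hbx
            (fun h => hvy h.symm) (fun h => hvb h.symm) (fun h => hvx h.symm) hqb hqx
            fun h => hnxy h.symm)
        rcases hDdom v with hvD | ⟨d, hdD, hdv⟩
        · -- v ∈ D
          obtain ⟨s, hvs, hsD, hs⟩ := hNP v x hvD hx hvnex fun h => hvx h.symm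
          by_cases hsp : G.Adj s p
          · exact hP5free (BTp5 hbx hxp hsp.symm hvs.symm hbp
              (hs b hbD (Ne.symm hvneb)) hvb (hs x hx (Ne.symm hvnex)) hvx
              fun h => hp v hvD hvnex h.symm)
          by_cases hsq : G.Adj s q
          · exact hP5free (BTp5 hby hyq hsq.symm hvs.symm hbq
              (hs b hbD (Ne.symm hvneb)) hvb (hs y hy (Ne.symm hvney)) hvy
              fun h => hq v hvD hvney h.symm)
          obtain ⟨c, hcD, hcv, hcx⟩ := hCN v x hvD hx hvnex fun h => hvx h.symm
          exact hP5free (BTp5 hvs.symm hcv.symm hcx hxp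
            (fun h => hs c hcD hcv.ne h.symm)
            (fun h => hs x hx (Ne.symm hvnex) h.symm) hsp
            (fun h => hvx h.symm)
            (hp v hvD hvnex)
            (hp c hcD hcx.ne))
        · -- v ∉ reach of the triple, dominated by d ∈ D
          have hdnx : d ≠ x := fun h => hvx (h ▸ hdv)
          have hdnb : d ≠ b := fun h => hvb (h ▸ hdv)
          have hdny : d ≠ y := fun h => hvy (h ▸ hdv)
          by_cases hdx : G.Adj d x
          · exact hP5free (BTp5 hdv.symm hdx hxp hpq
              (fun h => hvx h.symm) hvp hvq (hp d hdD hdnx) (hq d hdD hdny) hxq)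
          by_cases hdy : G.Adj d y
          · exact hP5free (BTp5 hdv.symm hdy hyq hpq.symm
              (fun h => hvy h.symm) hvq hvp (hq d hdD hdny) (hp d hdD hdnx) hyp)
          obtain ⟨r, hdr, hrD, hr⟩ := hNP d x hdD hx hdnx hdx
          by_cases hrp : G.Adj r p
          · by_cases hbd : G.Adj b d
            · exact hP5free (BTp5 hrp.symm hdr.symm hbd.symm hby
                (fun h => hp d hdD hdnx h.symm) (fun h => hbp h.symm) (fun h => hyp h.symm)
                (fun h => hr b hbD (Ne.symm hdnb) h.symm)
                (fun h => hr y hy (Ne.symm hdny) h.symm) hdy)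
            · exact hP5free (BTp5 hbx hxp hrp.symm hdr.symm hbp
                (hr b hbD (Ne.symm hdnb)) hbd (hr x hx (Ne.symm hdnx))
                (fun h => hdx h.symm) fun h => hp d hdD hdnx h.symm)
          · obtain ⟨c, hcD, hcd2, hcx⟩ := hCN d x hdD hx hdnx hdx
            exact hP5free (BTp5 hdr.symm hcd2.symm hcx hxp
              (fun h => hr c hcD hcd2.ne h.symm)
              (fun h => hr x hx (Ne.symm hdnx) h.symm) hrp hdx (hp d hdD hdnx)
              (hp c hcD hcx.ne))
      · -- p and q non-adjacent: immediate P5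
        exact hP5free (BTp5 hxp.symm hbx.symm hby hyq hpb hpy hpq hnxy hxq hbq)
    -- D has exactly three elements x, b, y
    have hsub : ({x, b, y} : Finset V) ⊆ D := by
      intro v hv
      simp only [mem_insert, mem_singleton] at hv
      rcases hv with rfl | rfl | rfl
      exacts [hx, hbD, hy]
    have hc3 : ({x, b, y} : Finset V).card = 3 := by
      rw [card_insert_of_notMem (by simp [Ne.symm hbnx, hnexy]),
        card_insert_of_notMem (by simp [hbny]), card_singleton]
    have hDeq : D = {x, b, y} := by
      have := eq_of_subset_of_card_le hsub (by omega)
      exact this.symm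
    refine ⟨↑D, fun v => ?_, Or.inl ?_⟩
    · rcases hDdom v with h | ⟨u, hu, huv⟩
      · exact Or.inl (by simpa using h)
      · exact Or.inr ⟨u, by simpa using hu, huv⟩
    · have hset : (↑D : Set V) = {x, b, y} := by
        rw [hDeq]
        simp
      rw [hset]
      exact BTp3iso G hbx.symm hby hnxy hnexy
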